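/- Let r₁, ..., rₙ be linear endomorphisms of Kⁿ given by rᵢ = 1 + eᵢ ⊗ αᵢ, where (e₁,...,eₙ) is the standard basis and αᵢ are linear functionals. Then the matrix of the product rₙ ⋯ r₂ r₁ in the basis (eᵢ) lies in the big cell, i.e. it factors as u₋⁻¹ h u₊ with u₋ lower unitriangular, u₊ upper unitriangular, and h diagonal invertible; moreover the matrix with (i,j) entry αᵢ(eⱼ) equals h u₊ − u₋. -/

import Mathlib

/-- Killing–Coxeter identity / Gauss factorization: the matrix (in the standard basis) of a
product `rₙ ⋯ r₂ r₁` of complex reflections `rᵢ = 1 + eᵢ ⊗ αᵢ` lies in the big cell, i.e.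
factors as `uLow⁻¹ h uUp` with `uLow` lower unitriangular, `uUp` upper unitriangular and `h`
invertible diagonal; moreover the matrix `(αᵢ(eⱼ))` equals `h uUp − uLow`. -/
theorem killing_coxeter {K : Type*} [Field K] (n : ℕ) (hn : 1 ≤ n)
    (α : Fin n → ((Fin n → K) →ₗ[K] K)) (r : Fin n → Module.End K (Fin n → K))
    (hr : ∀ i, r i = 1 + (α i).smulRight (Pi.single i 1))
    (hinv : ∀ i, IsUnit (r i)) :
    ∃ (uLow uUp h : Matrix (Fin n) (Fin n) K),
      (∀ i, uLow i i = 1) ∧ (∀ i j, i < j → uLow i j = 0) ∧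
      (∀ i, uUp i i = 1) ∧ (∀ i j, j < i → uUp i j = 0) ∧
      (∃ d : Fin n → K, (∀ i, d i ≠ 0) ∧ h = Matrix.diagonal d) ∧
      LinearMap.toMatrix' ((List.ofFn r).reverse.prod : Module.End K (Fin n → K)) =
        uLow⁻¹ * h * uUp ∧
      Matrix.of (fun i j => α i (Pi.single j 1)) = h * uUp - uLow := by
  classical
  set A : Matrix (Fin n) (Fin n) K := Matrix.of (fun i j => α i (Pi.single j 1)) with hAdef
  -- the endomorphisms, extended to ℕ
  set E : ℕ → Module.End K (Fin n → K) := fun k => if h : k < n then r ⟨k, h⟩ else 1 with hE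
  -- partial products
  set Q : ℕ → Module.End K (Fin n → K) := fun k => Nat.rec 1 (fun k q => E k * q) k with hQ
  have hQ0 : Q 0 = 1 := rfl
  have hQs : ∀ k, Q (k + 1) = E k * Q k := fun k => rfl
  set P : ℕ → Matrix (Fin n) (Fin n) K := fun k => LinearMap.toMatrix' (Q k) with hP
  have hP0 : P 0 = 1 := by simp [hP, hQ0, LinearMap.toMatrix'_one]
  have hPs : ∀ k, P (k + 1) = LinearMap.toMatrix' (E k) * P k := by
    intro k; simp [hP, hQs, LinearMap.toMatrix'_mul]
  -- matrix of r i
  have hM : ∀ i : Fin n, LinearMap.toMatrix' (r i)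
      = 1 + Matrix.of (fun p q => if p = i then A i q else 0) := by
    intro i
    ext p q
    rw [LinearMap.toMatrix'_apply, hr i]
    have hsingle : (fun j' : Fin n => if j' = q then (1:K) else 0) = Pi.single q 1 := by
      ext j'; by_cases h : j' = q <;> simp [h, Pi.single_apply]
    try rw [hsingle]
    simp only [LinearMap.add_apply, Module.End.one_apply, LinearMap.smulRight_apply,
      Matrix.add_apply, Matrix.one_apply, Matrix.of_apply, Pi.add_apply, Pi.smul_apply,
      Pi.single_apply, smul_eq_mul]
    by_cases h : p = i <;> by_cases h' : p = q <;> simp [h, h', hAdef, mul_comm]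
  -- entries of matrix of E k
  have hEent : ∀ (k : ℕ) (p q : Fin n), (p : ℕ) ≠ k →
      LinearMap.toMatrix' (E k) p q = (1 : Matrix (Fin n) (Fin n) K) p q := by
    intro k p q hpk
    by_cases h : k < n
    · rw [hE]; simp only [dif_pos h]
      rw [hM ⟨k, h⟩]
      have : p ≠ ⟨k, h⟩ := by intro hc; exact hpk (by rw [hc])
      simp [Matrix.add_apply, this]
    · rw [hE]; simp only [dif_neg h]; rw [LinearMap.toMatrix'_one]
  -- Lemma 1: rows ≥ k of P k are identity rows
  have lem1 : ∀ (k : ℕ) (m : Fin n), k ≤ (m : ℕ) → ∀ j, P k m j = (1 : Matrix (Fin n) (Fin n) K) m j := by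
    intro k
    induction k with
    | zero => intro m _ j; rw [hP0]
    | succ k ih =>
      intro m hm j
      have hmk : (m : ℕ) ≠ k := by omega
      rw [hPs, Matrix.mul_apply]
      have : ∀ q, LinearMap.toMatrix' (E k) m q * P k q j
          = (if m = q then 1 else 0) * P k q j := by
        intro q; rw [hEent k m q hmk, Matrix.one_apply]
      rw [Finset.sum_congr rfl fun q _ => this q]
      simp only [ite_mul, one_mul, zero_mul]
      rw [Finset.sum_ite_eq Finset.univ m (fun q => P k q j)]
      simp [ih m (by omega) j]
  -- Lemma 2: rows < a of P are stable from step a on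
  have lem2 : ∀ (a b : ℕ) (m : Fin n), a ≤ b → (m : ℕ) < a → ∀ j, P b m j = P a m j := by
    intro a b
    induction b with
    | zero => intro m hab _ j; interval_cases a; rfl
    | succ b ih =>
      intro m hab hma j
      rcases Nat.eq_or_lt_of_le hab with h | h
      · rw [h]
      · have hab' : a ≤ b := by omega
        have hmb : (m : ℕ) ≠ b := by omega
        rw [hPs, Matrix.mul_apply]
        have : ∀ q, LinearMap.toMatrix' (E b) m q * P b q j
            = (if m = q then 1 else 0) * P b q j := by
          intro q; rw [hEent b m q hmb, Matrix.one_apply]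
        rw [Finset.sum_congr rfl fun q _ => this q]
        simp only [ite_mul, one_mul, zero_mul]
        rw [Finset.sum_ite_eq Finset.univ m (fun q => P b q j)]
        simp only [Finset.mem_univ, if_pos]
        exact ih m hab' hma j
  -- key row formula
  have keyP : ∀ (i j : Fin n), P n i j = (1 : Matrix (Fin n) (Fin n) K) i j
      + (if i ≤ j then A i j else 0)
      + ∑ m ∈ Finset.univ.filter (fun m : Fin n => m < i), A i m * P n m j := by
    intro i j
    have hstep : P n i j = P ((i : ℕ) + 1) i j := lem2 ((i:ℕ)+1) n i (by omega) (by omega) j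
    rw [hstep, hPs, Matrix.mul_apply]
    have hEi : LinearMap.toMatrix' (E (i : ℕ)) = 1 + Matrix.of (fun p q => if p = i then A i q else 0) := by
      rw [hE]; simp only [dif_pos i.isLt, Fin.eta]; exact hM i
    have expand : ∀ q : Fin n, LinearMap.toMatrix' (E (i:ℕ)) i q * P (i:ℕ) q j
        = (if i = q then 1 else 0) * P (i:ℕ) q j + A i q * P (i:ℕ) q j := by
      intro q
      rw [hEi]
      simp [Matrix.add_apply, Matrix.one_apply, add_mul]
    rw [Finset.sum_congr rfl fun q _ => expand q, Finset.sum_add_distrib]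
    have s1 : ∑ q : Fin n, (if i = q then (1:K) else 0) * P (i:ℕ) q j = P (i:ℕ) i j := by
      simp only [ite_mul, one_mul, zero_mul]
      rw [Finset.sum_ite_eq Finset.univ i (fun q => P (i:ℕ) q j)]
      simp
    rw [s1, lem1 (i:ℕ) i le_rfl j]
    -- now split the second sum
    rw [← Finset.sum_filter_add_sum_filter_not Finset.univ (fun m : Fin n => m < i)
      (fun q => A i q * P (i:ℕ) q j)]
    have s2 : ∑ q ∈ Finset.univ.filter (fun m : Fin n => m < i), A i q * P (i:ℕ) q j
        = ∑ q ∈ Finset.univ.filter (fun m : Fin n => m < i), A i q * P n q j := by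
      refine Finset.sum_congr rfl fun q hq => ?_
      rw [Finset.mem_filter] at hq
      rw [lem2 (i:ℕ) n q (by omega) hq.2 j]
    have s3 : ∑ q ∈ Finset.univ.filter (fun m : Fin n => ¬ m < i), A i q * P (i:ℕ) q j
        = (if i ≤ j then A i j else 0) := by
      have : ∀ q ∈ Finset.univ.filter (fun m : Fin n => ¬ m < i),
          A i q * P (i:ℕ) q j = if q = j then (if i ≤ q then A i q else 0) else 0 := by
        intro q hq
        rw [Finset.mem_filter] at hq
        have hiq : i ≤ q := not_lt.mp hq.2
        rw [lem1 (i:ℕ) q (by exact_mod_cast hiq) j, Matrix.one_apply]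
        by_cases h : q = j
        · subst h; simp [hiq]
        · simp [h]
      rw [Finset.sum_congr rfl this, Finset.sum_ite_eq' _ j]
      by_cases hj : j ∈ Finset.univ.filter (fun m : Fin n => ¬ m < i)
      · rw [if_pos hj]
      · rw [if_neg hj]
        rw [Finset.mem_filter, not_and, not_not] at hj
        rw [if_neg (not_le.mpr (hj (Finset.mem_univ j)))]
    rw [s2, s3]; ring
  -- diagonal entries nonzero
  have hd : ∀ i : Fin n, (1 : K) + A i i ≠ 0 := by
    intro i hcontra
    have hinj : Function.Injective (r i) := ((Module.End.isUnit_iff _).mp (hinv i)).1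
    have : r i (Pi.single i 1) = ((1:K) + A i i) • (Pi.single i 1 : Fin n → K) := by
      rw [hr i]
      simp only [LinearMap.add_apply, Module.End.one_apply, LinearMap.smulRight_apply]
      rw [add_smul, one_smul]
      rfl
    rw [hcontra, zero_smul] at this
    have h0 : r i 0 = 0 := map_zero _
    have := hinj (this.trans h0.symm)
    have h1 : (Pi.single i 1 : Fin n → K) i = 0 := by rw [this]; rfl
    rw [Pi.single_eq_same] at h1
    exact one_ne_zero h1
  -- define the factors
  set d : Fin n → K := fun i => 1 + A i i with hddef
  set uLow : Matrix (Fin n) (Fin n) K :=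
    Matrix.of (fun i j => if i = j then 1 else if j < i then -A i j else 0) with hL
  set uUp : Matrix (Fin n) (Fin n) K :=
    Matrix.of (fun i j => if i = j then 1 else if i < j then A i j / d i else 0) with hU
  set h : Matrix (Fin n) (Fin n) K := Matrix.diagonal d with hh
  have hdne : ∀ i, d i ≠ 0 := fun i => hd i
  have hHU : ∀ i j, (h * uUp) i j = (1 : Matrix (Fin n) (Fin n) K) i j + (if i ≤ j then A i j else 0) := by
    intro i j
    rw [hh, Matrix.diagonal_mul, hU]
    simp only [Matrix.of_apply, Matrix.one_apply]
    rcases lt_trichotomy i j with hij | hij | hij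
    · rw [if_neg (ne_of_lt hij), if_pos hij, if_neg (ne_of_lt hij), if_pos (le_of_lt hij)]
      rw [mul_div_cancel₀ _ (hdne i), zero_add]
    · subst hij
      rw [if_pos rfl, if_pos rfl, if_pos le_rfl, mul_one, hddef]
    · rw [if_neg (ne_of_gt hij), if_neg (not_lt.mpr (le_of_lt hij)),
        if_neg (ne_of_gt hij), if_neg (not_le.mpr hij), mul_zero, add_zero]
  -- main identity uLow * P n = h * uUp
  have main : uLow * P n = h * uUp := by
    ext i j
    rw [Matrix.mul_apply, hHU i j]
    have expand : ∀ m : Fin n, uLow i m * P n m j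
        = (if i = m then 1 else 0) * P n m j + (if m < i then -A i m else 0) * P n m j := by
      intro m
      rw [hL]
      simp only [Matrix.of_apply]
      by_cases h1 : i = m
      · have : ¬ m < i := by rw [h1]; exact lt_irrefl m
        simp [h1, this]
      · by_cases h2 : m < i <;> simp [h1, h2]
    rw [Finset.sum_congr rfl fun m _ => expand m, Finset.sum_add_distrib]
    have s1 : ∑ m : Fin n, (if i = m then (1:K) else 0) * P n m j = P n i j := by
      simp only [ite_mul, one_mul, zero_mul]
      rw [Finset.sum_ite_eq Finset.univ i (fun m => P n m j)]
      simp
    have s2 : ∑ m : Fin n, (if m < i then -A i m else 0) * P n m j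
        = - ∑ m ∈ Finset.univ.filter (fun m : Fin n => m < i), A i m * P n m j := by
      rw [← Finset.sum_neg_distrib, Finset.sum_filter]
      refine Finset.sum_congr rfl fun m _ => ?_
      by_cases hm : m < i <;> simp [hm]
    rw [s1, s2, keyP i j]; ring
  -- invertibility of uLow
  have hLlow : uLow.BlockTriangular (OrderDual.toDual) := by
    intro i j hij
    rw [hL]
    simp only [Matrix.of_apply]
    have hij' : i < j := hij
    rw [if_neg (ne_of_lt hij'), if_neg (not_lt.mpr (le_of_lt hij'))]
  have hdetL : uLow.det = 1 := by
    rw [Matrix.det_of_lowerTriangular uLow (by exact hLlow)]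
    apply Finset.prod_eq_one
    intro i _
    rw [hL]; simp
  have hLunit : IsUnit uLow.det := by rw [hdetL]; exact isUnit_one
  refine ⟨uLow, uUp, h, ?_, ?_, ?_, ?_, ⟨d, hdne, rfl⟩, ?_, ?_⟩
  · intro i; rw [hL]; simp
  · intro i j hij; rw [hL]; simp only [Matrix.of_apply]
    rw [if_neg (ne_of_lt hij), if_neg (not_lt.mpr (le_of_lt hij))]
  · intro i; rw [hU]; simp
  · intro i j hij; rw [hU]; simp only [Matrix.of_apply]
    rw [if_neg (ne_of_gt hij), if_neg (not_lt.mpr (le_of_lt hij))]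
  · -- factorization
    have hlist : (List.ofFn r).reverse.prod = Q n := by
      have key : ∀ k, k ≤ n → ((List.ofFn r).take k).reverse.prod = Q k := by
        intro k
        induction k with
        | zero => intro _; simp [hQ0]
        | succ k ih =>
          intro hk
          have hk' : k ≤ n := by omega
          have hkn : k < n := by omega
          have hlen : k < (List.ofFn r).length := by simp [hkn]
          rw [List.take_succ, List.reverse_append, List.prod_append]
          have : (List.ofFn r)[k]? = some (r ⟨k, hkn⟩) := by
            rw [List.getElem?_eq_getElem hlen]
            simp
          rw [this]
          simp only [Option.toList_some, List.reverse_cons, List.reverse_nil, List.nil_append,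
            List.prod_cons, List.prod_nil, mul_one]
          rw [ih hk', hQs]
          congr 1
          rw [hE]; simp [hkn]
      have := key n le_rfl
      rwa [List.take_of_length_le (by simp)] at this
    rw [hlist]
    have hPn : LinearMap.toMatrix' (Q n) = P n := rfl
    rw [hPn, Matrix.mul_assoc, ← main, ← Matrix.mul_assoc,
      Matrix.nonsing_inv_mul uLow hLunit, Matrix.one_mul]
  · -- A = h uUp - uLow
    ext i j
    rw [Matrix.sub_apply, hHU i j, hL]
    simp only [Matrix.of_apply, Matrix.one_apply]
    rcases lt_trichotomy i j with hij | hij | hij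
    · rw [if_neg (ne_of_lt hij), if_pos (le_of_lt hij), if_neg (ne_of_lt hij),
        if_neg (not_lt.mpr (le_of_lt hij))]
      ring
    · subst hij; simp [hddef]
    · rw [if_neg (ne_of_gt hij), if_neg (not_le.mpr hij), if_neg (ne_of_gt hij), if_pos hij]
      ring
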